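/- Let c, r, η be positive real numbers with −1/2 < c − r < −η < 1 + η < c and 0 < η ≤ 1/2, and let J_1 be a positive integer. If θ_{1+η} ≤ 2.1, then, with σ = c + r·cos θ, ∫_0^{θ_{1+η}} log ζ(σ) dθ ≤ ((log ζ(1+η) + log ζ(c))/2)·(θ_{1+η} − π/2) + (π/(4J_1))·log ζ(c) + κ_2(J_1), where κ_2(J_1) = (π/(4J_1))·( log ζ(c+r) + 2·Σ_{j=1}^{J_1−1} log ζ( c + r·cos(πj/(2J_1)) ) ). -/

import Mathlib

open Complex

/-- `θ_y`: `0` if `c + r ≤ y`; `arccos((y-c)/r)` if `c - r ≤ y ≤ c + r`; `π` if `y ≤ c - r`. -/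
noncomputable def thetaY (c r y : ℝ) : ℝ :=
  if c + r ≤ y then 0
  else if c - r ≤ y then Real.arccos ((y - c) / r)
  else Real.pi

/-- `κ₂(J₁) = (π/(4J₁))(log ζ(c+r) + 2 ∑_{j=1}^{J₁-1} log ζ(c + r cos(πj/(2J₁))))`. -/
noncomputable def kappa2 (c r : ℝ) (J₁ : ℕ) : ℝ :=
  Real.pi / (4 * J₁) * (Real.log ‖riemannZeta ((c + r : ℝ) : ℂ)‖
    + 2 * ∑ j ∈ Finset.Icc 1 (J₁ - 1),
        Real.log ‖riemannZeta ((c + r * Real.cos (Real.pi * j / (2 * J₁)) : ℝ) : ℂ)‖)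

/-- If `f 0 ≥ 0` and `f' = F ≥ 0` on `[0,∞)`, then `f ≥ 0` on `[0,∞)`. -/
lemma ladder_aux {f F : ℝ → ℝ} (hder : ∀ x, HasDerivAt f (F x) x) (h0 : 0 ≤ f 0)
    (hF : ∀ x, 0 ≤ x → 0 ≤ F x) : ∀ x, 0 ≤ x → 0 ≤ f x := by
  have hmono : MonotoneOn f (Set.Ici (0:ℝ)) := by
    apply monotoneOn_of_deriv_nonneg (convex_Ici 0)
      (fun x _ => (hder x).differentiableAt.continuousAt.continuousWithinAt)
      (fun x _ => (hder x).differentiableAt.differentiableWithinAt)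
    intro x hx
    rw [(hder x).deriv]
    exact hF x (le_of_lt (by simpa using hx))
  intro x hx
  exact h0.trans (hmono Set.self_mem_Ici hx hx)

lemma step3 : ∀ x : ℝ, 0 ≤ x → x - x^3/6 ≤ Real.sin x := by
  have := ladder_aux (f := fun x => Real.sin x - (x - x^3/6)) (F := fun x => Real.cos x - (1 - x^2/2))
    (fun x => by
      have h := (Real.hasDerivAt_sin x).sub (((hasDerivAt_id x).sub
        (((hasDerivAt_pow 3 x)).div_const 6)))
      exact h.congr_deriv (by push_cast; ring))
    (by norm_num)
    (fun x _ => by have := Real.one_sub_sq_div_two_le_cos (x := x); linarith)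
  intro x hx; have := this x hx; linarith

lemma step4 : ∀ x : ℝ, 0 ≤ x → Real.cos x ≤ 1 - x^2/2 + x^4/24 := by
  have := ladder_aux (f := fun x => (1 - x^2/2 + x^4/24) - Real.cos x)
    (F := fun x => Real.sin x - (x - x^3/6))
    (fun x => by
      have h := ((((hasDerivAt_pow 2 x).div_const 2).neg.const_add 1).add
        ((hasDerivAt_pow 4 x).div_const 24)).sub (Real.hasDerivAt_cos x)
      exact h.congr_deriv (by push_cast; ring))
    (by norm_num)
    (fun x hx => by have := step3 x hx; linarith)
  intro x hx; have := this x hx; linarith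

lemma step5 : ∀ x : ℝ, 0 ≤ x → Real.sin x ≤ x - x^3/6 + x^5/120 := by
  have := ladder_aux (f := fun x => (x - x^3/6 + x^5/120) - Real.sin x)
    (F := fun x => (1 - x^2/2 + x^4/24) - Real.cos x)
    (fun x => by
      have h := (((hasDerivAt_id x).sub ((hasDerivAt_pow 3 x).div_const 6)).add
        ((hasDerivAt_pow 5 x).div_const 120)).sub (Real.hasDerivAt_sin x)
      exact h.congr_deriv (by push_cast; ring))
    (by norm_num)
    (fun x hx => by have := step4 x hx; linarith)
  intro x hx; have := this x hx; linarith

lemma step6 : ∀ x : ℝ, 0 ≤ x → 1 - x^2/2 + x^4/24 - x^6/720 ≤ Real.cos x := by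
  have := ladder_aux (f := fun x => Real.cos x - (1 - x^2/2 + x^4/24 - x^6/720))
    (F := fun x => (x - x^3/6 + x^5/120) - Real.sin x)
    (fun x => by
      have h := (Real.hasDerivAt_cos x).sub
        (((((hasDerivAt_pow 2 x).div_const 2).neg.const_add 1).add
          ((hasDerivAt_pow 4 x).div_const 24)).sub ((hasDerivAt_pow 6 x).div_const 720))
      exact h.congr_deriv (by push_cast; ring))
    (by norm_num)
    (fun x hx => by have := step5 x hx; linarith)
  intro x hx; have := this x hx; linarith

lemma step7 : ∀ x : ℝ, 0 ≤ x → x - x^3/6 + x^5/120 - x^7/5040 ≤ Real.sin x := by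
  have := ladder_aux (f := fun x => Real.sin x - (x - x^3/6 + x^5/120 - x^7/5040))
    (F := fun x => Real.cos x - (1 - x^2/2 + x^4/24 - x^6/720))
    (fun x => by
      have h := (Real.hasDerivAt_sin x).sub
        ((((hasDerivAt_id x).sub ((hasDerivAt_pow 3 x).div_const 6)).add
          ((hasDerivAt_pow 5 x).div_const 120)).sub ((hasDerivAt_pow 7 x).div_const 5040))
      exact h.congr_deriv (by push_cast; ring))
    (by norm_num)
    (fun x hx => by have := step6 x hx; linarith)
  intro x hx; have := this x hx; linarith

lemma step8 : ∀ x : ℝ, 0 ≤ x → Real.cos x ≤ 1 - x^2/2 + x^4/24 - x^6/720 + x^8/40320 := by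
  have := ladder_aux (f := fun x => (1 - x^2/2 + x^4/24 - x^6/720 + x^8/40320) - Real.cos x)
    (F := fun x => Real.sin x - (x - x^3/6 + x^5/120 - x^7/5040))
    (fun x => by
      have h := ((((((hasDerivAt_pow 2 x).div_const 2).neg.const_add 1).add
        ((hasDerivAt_pow 4 x).div_const 24)).sub ((hasDerivAt_pow 6 x).div_const 720)).add
        ((hasDerivAt_pow 8 x).div_const 40320)).sub (Real.hasDerivAt_cos x)
      exact h.congr_deriv (by push_cast; ring))
    (by norm_num)
    (fun x hx => by have := step7 x hx; linarith)
  intro x hx; have := this x hx; linarith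

lemma step9 : ∀ x : ℝ, 0 ≤ x →
    Real.sin x ≤ x - x^3/6 + x^5/120 - x^7/5040 + x^9/362880 := by
  have := ladder_aux
    (f := fun x => (x - x^3/6 + x^5/120 - x^7/5040 + x^9/362880) - Real.sin x)
    (F := fun x => (1 - x^2/2 + x^4/24 - x^6/720 + x^8/40320) - Real.cos x)
    (fun x => by
      have h1 := (((hasDerivAt_id x).sub ((hasDerivAt_pow 3 x).div_const 6)).add
        ((hasDerivAt_pow 5 x).div_const 120)).sub ((hasDerivAt_pow 7 x).div_const 5040)
      have h := (h1.add ((hasDerivAt_pow 9 x).div_const 362880)).sub (Real.hasDerivAt_sin x)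
      exact h.congr_deriv (by push_cast; ring))
    (by norm_num)
    (fun x hx => by have := step8 x hx; linarith)
  intro x hx; have := this x hx; linarith

lemma step10 : ∀ x : ℝ, 0 ≤ x →
    1 - x^2/2 + x^4/24 - x^6/720 + x^8/40320 - x^10/3628800 ≤ Real.cos x := by
  have := ladder_aux
    (f := fun x => Real.cos x - (1 - x^2/2 + x^4/24 - x^6/720 + x^8/40320 - x^10/3628800))
    (F := fun x => (x - x^3/6 + x^5/120 - x^7/5040 + x^9/362880) - Real.sin x)
    (fun x => by
      have h1 := (((((hasDerivAt_pow 2 x).div_const 2).neg.const_add 1).add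
          ((hasDerivAt_pow 4 x).div_const 24)).sub ((hasDerivAt_pow 6 x).div_const 720)).add
          ((hasDerivAt_pow 8 x).div_const 40320)
      have h := (Real.hasDerivAt_cos x).sub (h1.sub ((hasDerivAt_pow 10 x).div_const 3628800))
      exact h.congr_deriv (by push_cast; ring))
    (by norm_num)
    (fun x hx => by have := step9 x hx; linarith)
  intro x hx; have := this x hx; linarith

lemma cos_twoPointOne : (-0.50487 : ℝ) ≤ Real.cos 2.1 := by
  have h := step10 2.1 (by norm_num)
  have : (-0.50487:ℝ) ≤ 1 - (2.1:ℝ)^2/2 + 2.1^4/24 - 2.1^6/720 + 2.1^8/40320 - 2.1^10/3628800 := by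
    norm_num
  linarith

lemma convexOn_exp_neg_mul_cos {u : ℝ} (hu : Real.log 2 ≤ u) :
    ConvexOn ℝ (Set.Icc (0:ℝ) 2.1) (fun θ => Real.exp (-(u * Real.cos θ))) := by
  have hu0 : 0 < u := lt_of_lt_of_le (Real.log_pos one_lt_two) hu
  have hlog2 : (0.6931 : ℝ) ≤ Real.log 2 := by
    have := Real.log_two_gt_d9; linarith
  have hder : ∀ x : ℝ, HasDerivAt (fun θ => Real.exp (-(u * Real.cos θ)))
      (Real.exp (-(u * Real.cos x)) * (u * Real.sin x)) x := by
    intro x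
    have h := (((Real.hasDerivAt_cos x).const_mul u).neg).exp
    exact h.congr_deriv (by simp only [Pi.neg_apply]; ring)
  have hderiv_eq : deriv (fun θ => Real.exp (-(u * Real.cos θ)))
      = fun x => Real.exp (-(u * Real.cos x)) * (u * Real.sin x) :=
    funext fun x => (hder x).deriv
  have hder2 : ∀ x : ℝ, HasDerivAt (fun x => Real.exp (-(u * Real.cos x)) * (u * Real.sin x))
      (Real.exp (-(u * Real.cos x)) * ((u * Real.sin x)^2 + u * Real.cos x)) x := by
    intro x
    have h := (hder x).mul ((Real.hasDerivAt_sin x).const_mul u)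
    exact h.congr_deriv (by ring)
  refine convexOn_of_deriv2_nonneg (convex_Icc _ _)
    (Continuous.continuousOn (by continuity))
    (fun x _ => (hder x).differentiableAt.differentiableWithinAt)
    (by rw [hderiv_eq]; exact fun x _ => (hder2 x).differentiableAt.differentiableWithinAt)
    (fun x hx => ?_)
  rw [interior_Icc] at hx
  have hx0 : (0:ℝ) ≤ x := le_of_lt hx.1
  have hx21 : x ≤ 2.1 := le_of_lt hx.2
  have : deriv^[2] (fun θ => Real.exp (-(u * Real.cos θ))) x
      = Real.exp (-(u * Real.cos x)) * ((u * Real.sin x)^2 + u * Real.cos x) := by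
    rw [Function.iterate_succ, Function.iterate_one, Function.comp_apply, hderiv_eq]
    exact (hder2 x).deriv
  rw [this]
  apply mul_nonneg (Real.exp_nonneg _)
  -- key inequality
  have hcosx : (-0.50487 : ℝ) ≤ Real.cos x := by
    refine le_trans cos_twoPointOne ?_
    exact Real.cos_le_cos_of_nonneg_of_le_pi hx0
      (by linarith [Real.pi_gt_d6]) hx21
  have hcos1 : Real.cos x ≤ 1 := Real.cos_le_one x
  have hsin : Real.sin x ^ 2 = 1 - Real.cos x ^ 2 := by
    have := Real.sin_sq_add_cos_sq x; linarith
  have expand : (u * Real.sin x)^2 + u * Real.cos x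
      = u * (u * (1 - Real.cos x ^ 2) + Real.cos x) := by rw [mul_pow, hsin]; ring
  rw [expand]
  apply mul_nonneg (le_of_lt hu0)
  set y := Real.cos x
  have hu' : (0.6931 : ℝ) ≤ u := le_trans hlog2 hu
  rcases le_or_gt 0 y with hy | hy
  · have : 0 ≤ 1 - y^2 := by nlinarith
    positivity
  · have hy2 : y^2 ≤ 1 := by nlinarith
    nlinarith [mul_nonneg (sub_nonneg.2 hu') (sub_nonneg.2 hy2)]

lemma convexOn_tsum {ι : Type*} {s : Set ℝ} (hs : Convex ℝ s) {f : ι → ℝ → ℝ}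
    (hf : ∀ i, ConvexOn ℝ s (f i)) (hnn : ∀ i, ∀ x ∈ s, 0 ≤ f i x)
    (hsum : ∀ x ∈ s, Summable fun i => f i x) :
    ConvexOn ℝ s (fun x => ∑' i, f i x) := by
  refine ⟨hs, fun x hx y hy a b ha hb hab => ?_⟩
  have hxy : a • x + b • y ∈ s := hs hx hy ha hb hab
  have hle : ∀ i, f i (a • x + b • y) ≤ a * f i x + b * f i y := fun i => by
    have := (hf i).2 hx hy ha hb hab
    simpa [smul_eq_mul] using this
  have hsum2 : Summable (fun i => a * f i x + b * f i y) :=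
    ((hsum x hx).mul_left a).add ((hsum y hy).mul_left b)
  calc ∑' i, f i (a • x + b • y) ≤ ∑' i, (a * f i x + b * f i y) :=
        Summable.tsum_le_tsum hle (Summable.of_nonneg_of_le (fun i => hnn i _ hxy) hle hsum2) hsum2
    _ = a • ∑' i, f i x + b • ∑' i, f i y := by
        rw [Summable.tsum_add ((hsum x hx).mul_left a) ((hsum y hy).mul_left b),
          tsum_mul_left, tsum_mul_left]; simp [smul_eq_mul]

lemma trapezoid {f : ℝ → ℝ} {a b : ℝ} (hab : a ≤ b)
    (hconv : ConvexOn ℝ (Set.Icc a b) f) (hcont : ContinuousOn f (Set.Icc a b)) :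
    ∫ x in a..b, f x ≤ (f a + f b) / 2 * (b - a) := by
  rcases eq_or_lt_of_le hab with rfl | hab'
  · simp
  have hba : (0:ℝ) < b - a := by linarith
  have key : ∀ x ∈ Set.Icc a b, f x ≤ f a + (f b - f a) / (b - a) * (x - a) := by
    intro x hx
    have h1 : (0:ℝ) ≤ (b - x) / (b - a) := by
      apply div_nonneg _ (le_of_lt hba); linarith [hx.2]
    have h2 : (0:ℝ) ≤ (x - a) / (b - a) := by
      apply div_nonneg _ (le_of_lt hba); linarith [hx.1]
    have h3 : (b - x) / (b - a) + (x - a) / (b - a) = 1 := by field_simp; ring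
    have h4 : ((b - x) / (b - a)) • a + ((x - a) / (b - a)) • b = x := by
      simp only [smul_eq_mul]; field_simp; ring
    have := hconv.2 (Set.left_mem_Icc.2 hab) (Set.right_mem_Icc.2 hab) h1 h2 h3
    rw [h4] at this
    have expand : ((b - x) / (b - a)) • f a + ((x - a) / (b - a)) • f b
        = f a + (f b - f a) / (b - a) * (x - a) := by
      simp only [smul_eq_mul]; field_simp; ring
    linarith [expand ▸ this]
  have hint : IntervalIntegrable f MeasureTheory.volume a b := by
    apply ContinuousOn.intervalIntegrable
    rwa [Set.uIcc_of_le hab]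
  have hlin : IntervalIntegrable (fun x => f a + (f b - f a) / (b - a) * (x - a))
      MeasureTheory.volume a b := by
    apply ContinuousOn.intervalIntegrable
    exact (continuous_const.add (continuous_const.mul (continuous_id.sub continuous_const))).continuousOn
  calc ∫ x in a..b, f x ≤ ∫ x in a..b, (f a + (f b - f a) / (b - a) * (x - a)) := by
        apply intervalIntegral.integral_mono_on hab hint hlin key
    _ = (f a + f b) / 2 * (b - a) := by
        rw [intervalIntegral.integral_add (intervalIntegrable_const)
          (by apply Continuous.intervalIntegrable; continuity),
          intervalIntegral.integral_const_mul]
        have : ∫ x in a..b, (x - a) = (b - a)^2 / 2 := by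
          rw [intervalIntegral.integral_sub (by apply Continuous.intervalIntegrable; continuity)
            intervalIntegrable_const, integral_id,
            intervalIntegral.integral_const]
          simp [smul_eq_mul]; ring
        rw [this, intervalIntegral.integral_const]
        field_simp
        ring

lemma prime_rpow_lt_one {p : Nat.Primes} {σ : ℝ} (hσ : 1 < σ) :
    0 ≤ ((p:ℕ):ℝ) ^ (-σ) ∧ ((p:ℕ):ℝ) ^ (-σ) < 1 ∧ ((p:ℕ):ℝ) ^ (-σ) ≤ 1/2 := by
  have hp2 : (2:ℝ) ≤ ((p:ℕ):ℝ) := by exact_mod_cast p.prop.two_le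
  refine ⟨Real.rpow_nonneg (by linarith) _, ?_, ?_⟩
  · exact Real.rpow_lt_one_of_one_lt_of_neg (by linarith) (by linarith)
  · calc ((p:ℕ):ℝ) ^ (-σ) ≤ (2:ℝ) ^ (-σ) :=
          Real.rpow_le_rpow_of_nonpos (by norm_num) hp2 (by linarith)
      _ ≤ (2:ℝ) ^ (-1:ℝ) :=
          Real.rpow_le_rpow_of_exponent_le (by norm_num) (by linarith)
      _ = 1/2 := by rw [Real.rpow_neg_one]; norm_num

lemma summable_neg_log_primes {σ : ℝ} (hσ : 1 < σ) :
    Summable (fun p : Nat.Primes => -Real.log (1 - ((p:ℕ):ℝ) ^ (-σ))) := by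
  have hbase : Summable (fun n : ℕ => (n:ℝ) ^ (-σ)) :=
    Real.summable_nat_rpow.2 (by linarith)
  have hsub : Summable (fun p : Nat.Primes => ((p:ℕ):ℝ) ^ (-σ)) := by
    exact hbase.subtype {p | Nat.Prime p}
  apply Summable.of_nonneg_of_le _ _ (hsub.mul_left 2)
  · intro p
    obtain ⟨h0, h1, _⟩ := prime_rpow_lt_one (p := p) hσ
    rw [neg_nonneg]
    exact Real.log_nonpos (by linarith) (by linarith)
  · intro p
    obtain ⟨h0, h1, hhalf⟩ := prime_rpow_lt_one (p := p) hσ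
    set x := ((p:ℕ):ℝ) ^ (-σ)
    have hx1 : (0:ℝ) < 1 - x := by linarith
    have : -Real.log (1 - x) = Real.log (1 - x)⁻¹ := by rw [Real.log_inv]
    rw [this]
    have h2 : Real.log (1-x)⁻¹ ≤ (1-x)⁻¹ - 1 := Real.log_le_sub_one_of_pos (by positivity)
    have h3 : (1-x)⁻¹ - 1 = x / (1-x) := by field_simp; ring
    have h4 : x / (1-x) ≤ 2 * x := by
      rw [div_le_iff₀ hx1]; nlinarith
    linarith

lemma zeta_log_repr {σ : ℝ} (hσ : 1 < σ) :
    Real.log ‖riemannZeta (σ : ℂ)‖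
      = ∑' p : Nat.Primes, -Real.log (1 - ((p:ℕ):ℝ) ^ (-σ)) := by
  have hre : 1 < (σ:ℂ).re := by simpa using hσ
  have hEuler := riemannZeta_eulerProduct_exp_log hre
  have hterm : ∀ p : Nat.Primes,
      -Complex.log (1 - (p:ℂ) ^ (-(σ:ℂ))) = ((-Real.log (1 - ((p:ℕ):ℝ) ^ (-σ)) : ℝ) : ℂ) := by
    intro p
    obtain ⟨h0, h1, _⟩ := prime_rpow_lt_one (p := p) hσ
    have hp0 : (0:ℝ) ≤ ((p:ℕ):ℝ) := by positivity
    have hcpow : ((((p:ℕ):ℝ) ^ (-σ) : ℝ) : ℂ) = (p:ℂ) ^ (-(σ:ℂ)) := by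
      rw [Complex.ofReal_cpow hp0]
      push_cast
      ring_nf
    rw [← hcpow, ← Complex.ofReal_one, ← Complex.ofReal_sub, ← Complex.ofReal_log (by linarith),
      ← Complex.ofReal_neg]
  have hsum := summable_neg_log_primes hσ
  calc Real.log ‖riemannZeta (σ:ℂ)‖
      = Real.log ‖Complex.exp (∑' p : Nat.Primes, -Complex.log (1 - (p:ℂ) ^ (-(σ:ℂ))))‖ := by
        rw [hEuler]
    _ = Real.log ‖Complex.exp ((↑(∑' p : Nat.Primes, -Real.log (1 - ((p:ℕ):ℝ) ^ (-σ))) : ℂ))‖ := by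
        rw [tsum_congr hterm, Complex.ofReal_tsum]
    _ = ∑' p : Nat.Primes, -Real.log (1 - ((p:ℕ):ℝ) ^ (-σ)) := by
        rw [← Complex.ofReal_exp, Complex.norm_real, Real.norm_eq_abs,
          abs_of_pos (Real.exp_pos _), Real.log_exp]

lemma ConvexOn.congr'' {s : Set ℝ} {f g : ℝ → ℝ} (hf : ConvexOn ℝ s f)
    (h : ∀ x ∈ s, f x = g x) : ConvexOn ℝ s g :=
  ⟨hf.1, fun x hx y hy a b ha hb hab => by
    rw [← h _ hx, ← h _ hy, ← h _ (hf.1 hx hy ha hb hab)]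
    exact hf.2 hx hy ha hb hab⟩

lemma convexOn_w {c r T : ℝ} (hr1 : 1 ≤ r) (hT21 : T ≤ 2.1)
    (hσ : ∀ θ ∈ Set.Icc (0:ℝ) T, 1 < c + r * Real.cos θ) (p : Nat.Primes) :
    ConvexOn ℝ (Set.Icc (0:ℝ) T)
      (fun θ => -Real.log (1 - ((p:ℕ):ℝ) ^ (-(c + r * Real.cos θ)))) := by
  have hsub : Set.Icc (0:ℝ) T ⊆ Set.Icc (0:ℝ) 2.1 := Set.Icc_subset_Icc le_rfl hT21
  have hsubI : Set.Icc (0:ℝ) T ⊆ Set.Icc (0:ℝ) (2.1:ℝ) := hsub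
  have hp2 : (2:ℝ) ≤ ((p:ℕ):ℝ) := by exact_mod_cast p.prop.two_le
  have hp0 : (0:ℝ) < ((p:ℕ):ℝ) := by linarith
  have hlogp : Real.log 2 ≤ Real.log ((p:ℕ):ℝ) := Real.log_le_log (by norm_num) hp2
  have hlog2pos : (0:ℝ) < Real.log 2 := Real.log_pos (by norm_num)
  have hterm : ∀ k : ℕ, ConvexOn ℝ (Set.Icc (0:ℝ) T)
      (fun θ => (((p:ℕ):ℝ) ^ (-(c + r * Real.cos θ))) ^ (k+1) / ((k:ℝ)+1)) := by
    intro k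
    have hk0 : (0:ℝ) ≤ (k:ℝ) := Nat.cast_nonneg k
    set u := ((k:ℝ)+1) * r * Real.log ((p:ℕ):ℝ) with hu
    have hlogp0 : (0:ℝ) ≤ Real.log ((p:ℕ):ℝ) := le_trans hlog2pos.le hlogp
    have hu2 : Real.log 2 ≤ u := by
      have h1 : Real.log ((p:ℕ):ℝ) ≤ r * Real.log ((p:ℕ):ℝ) :=
        le_mul_of_one_le_left hlogp0 hr1
      have h2 : r * Real.log ((p:ℕ):ℝ) ≤ ((k:ℝ)+1) * (r * Real.log ((p:ℕ):ℝ)) :=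
        le_mul_of_one_le_left (by nlinarith) (by linarith)
      rw [hu, mul_assoc]
      linarith
    set A := Real.exp (-(((k:ℝ)+1) * c * Real.log ((p:ℕ):ℝ))) / ((k:ℝ)+1) with hA
    have hA0 : (0:ℝ) ≤ A := by positivity
    have hconv := ((convexOn_exp_neg_mul_cos hu2).smul hA0).subset hsubI (convex_Icc _ _)
    refine hconv.congr'' (fun θ _ => ?_)
    have hrpow : ((p:ℕ):ℝ) ^ (-(c + r * Real.cos θ))
        = Real.exp (Real.log ((p:ℕ):ℝ) * (-(c + r * Real.cos θ))) :=
      Real.rpow_def_of_pos hp0 _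
    rw [hrpow, ← Real.exp_nat_mul, smul_eq_mul, hA, div_mul_eq_mul_div, ← Real.exp_add]
    congr 2
    push_cast
    ring
  refine (convexOn_tsum (convex_Icc _ _) hterm (fun k θ hθ => by positivity)
    (fun θ hθ => ?_)).congr'' (fun θ hθ => ?_)
  · obtain ⟨h0, h1, _⟩ := prime_rpow_lt_one (p := p) (hσ θ hθ)
    exact (Real.hasSum_pow_div_log_of_abs_lt_one (by rwa [_root_.abs_of_nonneg h0])).summable
  · obtain ⟨h0, h1, _⟩ := prime_rpow_lt_one (p := p) (hσ θ hθ)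
    exact (Real.hasSum_pow_div_log_of_abs_lt_one (by rwa [_root_.abs_of_nonneg h0])).tsum_eq

lemma convexOn_F {c r T : ℝ} (hr1 : 1 ≤ r) (hT21 : T ≤ 2.1)
    (hσ : ∀ θ ∈ Set.Icc (0:ℝ) T, 1 < c + r * Real.cos θ) :
    ConvexOn ℝ (Set.Icc (0:ℝ) T)
      (fun θ => Real.log ‖riemannZeta ((c + r * Real.cos θ : ℝ) : ℂ)‖) := by
  refine (convexOn_tsum (convex_Icc _ _) (fun p => convexOn_w hr1 hT21 hσ p)
    (fun p θ hθ => ?_) (fun θ hθ => summable_neg_log_primes (hσ θ hθ))).congr''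
    (fun θ hθ => (zeta_log_repr (hσ θ hθ)).symm)
  obtain ⟨h0, h1, _⟩ := prime_rpow_lt_one (p := p) (hσ θ hθ)
  rw [neg_nonneg]
  exact Real.log_nonpos (by linarith) (by linarith)

lemma contOn_F {c r T : ℝ}
    (hσ : ∀ θ ∈ Set.Icc (0:ℝ) T, 1 < c + r * Real.cos θ) :
    ContinuousOn (fun θ => Real.log ‖riemannZeta ((c + r * Real.cos θ : ℝ) : ℂ)‖)
      (Set.Icc (0:ℝ) T) := by
  have hζcont : ContinuousOn riemannZeta {s : ℂ | s ≠ 1} :=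
    fun s hs => (differentiableAt_riemannZeta hs).continuousAt.continuousWithinAt
  have hmap : Set.MapsTo (fun θ : ℝ => ((c + r * Real.cos θ : ℝ) : ℂ)) (Set.Icc 0 T)
      {s : ℂ | s ≠ 1} := by
    intro θ hθ
    have h1 := hσ θ hθ
    simp only [Set.mem_setOf_eq]
    intro h
    have h2 : ((c + r * Real.cos θ : ℝ) : ℂ).re = 1 := by rw [h]; simp
    simp only [Complex.ofReal_re] at h2
    linarith
  have hinner : ContinuousOn (fun θ : ℝ => ((c + r * Real.cos θ : ℝ) : ℂ))
      (Set.Icc (0:ℝ) T) := Continuous.continuousOn (by continuity)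
  refine ContinuousOn.log ((hζcont.comp hinner hmap).norm) ?_
  intro θ hθ
  simpa using riemannZeta_ne_zero_of_one_lt_re (s := ((c + r * Real.cos θ : ℝ) : ℂ)) (by simpa only [Complex.ofReal_re] using hσ θ hθ)

lemma sum_pairs (g : ℕ → ℝ) : ∀ n : ℕ, 1 ≤ n →
    ∑ j ∈ Finset.range n, (g j + g (j+1))
      = g 0 + g n + 2 * ∑ j ∈ Finset.Icc 1 (n-1), g j := by
  intro n
  induction n with
  | zero => intro h; exact absurd h (by omega)
  | succ m ih =>
    intro _
    rcases Nat.eq_zero_or_pos m with rfl | hm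
    · simp
    · rw [Finset.sum_range_succ, ih hm]
      have h1 : Finset.Icc 1 (m+1-1) = Finset.Icc 1 (m-1) ∪ {m} := by
        rw [Nat.add_sub_cancel]
        ext x
        simp only [Finset.mem_Icc, Finset.mem_union, Finset.mem_singleton]
        omega
      rw [h1, Finset.sum_union (by
        simp only [Finset.disjoint_singleton_right, Finset.mem_Icc]; omega)]
      simp only [Finset.sum_singleton]
      ring

/-- **Lemma 3.14, first bound.** If `θ_{1+η} ≤ 2.1`, then for `σ = c + r cos θ`,
`∫₀^{θ_{1+η}} log ζ(σ) dθ ≤ ((log ζ(1+η) + log ζ(c))/2)(θ_{1+η} - π/2)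
  + (π/(4J₁)) log ζ(c) + κ₂(J₁)`. -/
theorem zeta_integral_bound_first (c r η : ℝ) (hc : 0 < c) (hr : 0 < r) (hη₀ : 0 < η)
    (h₁ : -(1 / 2) < c - r) (h₂ : c - r < -η) (h₃ : 1 + η < c) (hη₁ : η ≤ 1 / 2)
    (J₁ : ℕ) (hJ₁ : 0 < J₁)
    (hθ : thetaY c r (1 + η) ≤ 2.1) :
    (∫ θ in (0 : ℝ)..(thetaY c r (1 + η)),
        Real.log ‖riemannZeta ((c + r * Real.cos θ : ℝ) : ℂ)‖)
      ≤ (Real.log ‖riemannZeta ((1 + η : ℝ) : ℂ)‖ + Real.log ‖riemannZeta ((c : ℝ) : ℂ)‖) / 2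
          * (thetaY c r (1 + η) - Real.pi / 2)
        + Real.pi / (4 * J₁) * Real.log ‖riemannZeta ((c : ℝ) : ℂ)‖
        + kappa2 c r J₁ := by
  have hπ : (3.141592 : ℝ) < Real.pi := Real.pi_gt_d6
  have hr1 : (1:ℝ) ≤ r := by linarith
  set T := thetaY c r (1 + η) with hT
  have hT_eq : T = Real.arccos ((1 + η - c) / r) := by
    rw [hT]; unfold thetaY
    rw [if_neg (by push_neg; linarith), if_pos (by linarith)]
  have hx1 : (-1:ℝ) ≤ (1 + η - c) / r := by
    rw [le_div_iff₀ hr]; linarith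
  have hx0 : (1 + η - c) / r < 0 := div_neg_of_neg_of_pos (by linarith) hr
  have hcosT : Real.cos T = (1 + η - c) / r := by
    rw [hT_eq]; exact Real.cos_arccos hx1 (by linarith)
  have hσT : c + r * Real.cos T = 1 + η := by
    rw [hcosT]; field_simp; ring
  have hT_lb : Real.pi / 2 ≤ T := by
    rw [hT_eq, Real.arccos_eq_pi_div_two_sub_arcsin]
    have := Real.arcsin_nonpos.2 hx0.le
    linarith
  have hT21 : T ≤ 2.1 := hθ
  have hT0 : (0:ℝ) ≤ T := by linarith
  have hσ : ∀ θ ∈ Set.Icc (0:ℝ) T, 1 < c + r * Real.cos θ := by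
    intro θ hθ'
    have hcos : Real.cos T ≤ Real.cos θ :=
      Real.cos_le_cos_of_nonneg_of_le_pi hθ'.1 (by linarith) hθ'.2
    nlinarith
  set F := fun θ : ℝ => Real.log ‖riemannZeta ((c + r * Real.cos θ : ℝ) : ℂ)‖ with hF
  have hconv : ConvexOn ℝ (Set.Icc (0:ℝ) T) F := convexOn_F hr1 hT21 hσ
  have hcont : ContinuousOn F (Set.Icc (0:ℝ) T) := contOn_F hσ
  have hintOn : ∀ u v : ℝ, 0 ≤ u → u ≤ v → v ≤ T →
      IntervalIntegrable F MeasureTheory.volume u v := by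
    intro u v hu huv hvT
    apply ContinuousOn.intervalIntegrable
    rw [Set.uIcc_of_le huv]
    exact hcont.mono (Set.Icc_subset_Icc hu hvT)
  -- endpoint values of F
  have hF0 : F 0 = Real.log ‖riemannZeta ((c + r : ℝ) : ℂ)‖ := by
    rw [hF]; norm_num
  have hFpi2 : F (Real.pi / 2) = Real.log ‖riemannZeta ((c : ℝ) : ℂ)‖ := by
    rw [hF]; norm_num [Real.cos_pi_div_two]
  have hFT : F T = Real.log ‖riemannZeta ((1 + η : ℝ) : ℂ)‖ := by
    rw [hF]; norm_num [hσT]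
  -- nodes
  have hJ : (0:ℝ) < (J₁:ℝ) := by exact_mod_cast hJ₁
  set a : ℕ → ℝ := fun j => Real.pi * (j:ℝ) / (2 * (J₁:ℝ)) with ha
  have ha0 : a 0 = 0 := by simp [ha]
  have haJ : a J₁ = Real.pi / 2 := by
    rw [ha]; field_simp
  have hamono : ∀ j k : ℕ, j ≤ k → a j ≤ a k := by
    intro j k hjk
    rw [ha]
    apply div_le_div_of_nonneg_right _ (by positivity)
    have : (j:ℝ) ≤ (k:ℝ) := by exact_mod_cast hjk
    nlinarith
  have haUB : ∀ j : ℕ, j ≤ J₁ → a j ≤ Real.pi / 2 := by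
    intro j hj
    have := hamono j J₁ hj
    rwa [haJ] at this
  have hpi2T : Real.pi / 2 ≤ T := hT_lb
  -- composite trapezoid on [0, π/2]
  have hwidth : ∀ k : ℕ, a (k+1) - a k = Real.pi / (2 * (J₁:ℝ)) := by
    intro k
    rw [ha]
    push_cast
    field_simp
    ring
  have hpiece : ∀ k : ℕ, k < J₁ → (∫ x in (a k)..(a (k+1)), F x)
      ≤ (F (a k) + F (a (k+1))) / 2 * (Real.pi / (2 * (J₁:ℝ))) := by
    intro k hk
    have hk1 : k + 1 ≤ J₁ := hk
    have hsub : Set.Icc (a k) (a (k+1)) ⊆ Set.Icc (0:ℝ) T := by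
      apply Set.Icc_subset_Icc
      · rw [ha]; positivity
      · exact le_trans (haUB _ hk1) hpi2T
    have := trapezoid (hamono k (k+1) (by omega))
      (hconv.subset hsub (convex_Icc _ _)) (hcont.mono hsub)
    rwa [hwidth k] at this
  have hadj : ∑ k ∈ Finset.range J₁, (∫ x in (a k)..(a (k+1)), F x)
      = ∫ x in (a 0)..(a J₁), F x := by
    apply intervalIntegral.sum_integral_adjacent_intervals
    intro k hk
    apply hintOn
    · rw [ha]; positivity
    · exact hamono k (k+1) (by omega)
    · exact le_trans (haUB _ hk) hpi2T
  set S := ∑ j ∈ Finset.Icc 1 (J₁ - 1), F (a j) with hS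
  have hcomp : (∫ x in (0:ℝ)..(Real.pi/2), F x)
      ≤ Real.pi / (4 * (J₁:ℝ)) * (F 0 + F (Real.pi/2) + 2 * S) := by
    have h1 : (∫ x in (0:ℝ)..(Real.pi/2), F x)
        = ∑ k ∈ Finset.range J₁, (∫ x in (a k)..(a (k+1)), F x) := by
      rw [hadj, ha0, haJ]
    rw [h1]
    calc ∑ k ∈ Finset.range J₁, (∫ x in (a k)..(a (k+1)), F x)
        ≤ ∑ k ∈ Finset.range J₁,
            (F (a k) + F (a (k+1))) / 2 * (Real.pi / (2 * (J₁:ℝ))) :=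
          Finset.sum_le_sum (fun k hk => hpiece k (Finset.mem_range.1 hk))
      _ = (Real.pi / (4 * (J₁:ℝ)))
            * ∑ k ∈ Finset.range J₁, (F (a k) + F (a (k+1))) := by
          rw [Finset.mul_sum]
          apply Finset.sum_congr rfl
          intro k _
          field_simp
          ring
      _ = Real.pi / (4 * (J₁:ℝ)) * (F (a 0) + F (a J₁) + 2 * S) := by
          rw [sum_pairs (fun j => F (a j)) J₁ hJ₁]
      _ = Real.pi / (4 * (J₁:ℝ)) * (F 0 + F (Real.pi/2) + 2 * S) := by
          rw [ha0, haJ]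
  -- trapezoid on [π/2, T]
  have hsub2 : Set.Icc (Real.pi/2) T ⊆ Set.Icc (0:ℝ) T :=
    Set.Icc_subset_Icc (by positivity) le_rfl
  have htrap2 : (∫ x in (Real.pi/2)..T, F x)
      ≤ (F (Real.pi/2) + F T) / 2 * (T - Real.pi/2) :=
    trapezoid hpi2T (hconv.subset hsub2 (convex_Icc _ _)) (hcont.mono hsub2)
  -- split
  have hsplit : (∫ x in (0:ℝ)..T, F x)
      = (∫ x in (0:ℝ)..(Real.pi/2), F x) + ∫ x in (Real.pi/2)..T, F x :=
    (intervalIntegral.integral_add_adjacent_intervals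
      (hintOn 0 (Real.pi/2) le_rfl (by positivity) hpi2T)
      (hintOn (Real.pi/2) T (by positivity) hpi2T le_rfl)).symm
  -- assemble
  have hSval : kappa2 c r J₁ = Real.pi / (4 * (J₁:ℝ))
      * (Real.log ‖riemannZeta ((c + r : ℝ) : ℂ)‖ + 2 * S) := by
    rw [kappa2, hS]
  calc (∫ x in (0:ℝ)..T, F x)
      ≤ Real.pi / (4 * (J₁:ℝ)) * (F 0 + F (Real.pi/2) + 2 * S)
        + (F (Real.pi/2) + F T) / 2 * (T - Real.pi/2) := by
        rw [hsplit]; exact add_le_add hcomp htrap2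
    _ = (Real.log ‖riemannZeta ((1 + η : ℝ) : ℂ)‖
          + Real.log ‖riemannZeta ((c : ℝ) : ℂ)‖) / 2 * (T - Real.pi / 2)
        + Real.pi / (4 * (J₁:ℝ)) * Real.log ‖riemannZeta ((c : ℝ) : ℂ)‖
        + kappa2 c r J₁ := by
        rw [hF0, hFpi2, hFT, hSval]
        ring
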